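/- With A = U1 ⊙ ... ⊙ UN a nonzero matrix and notation as in the conditional-distribution lemma, the normalization constant for the first draw (k = 1) equals the rank of A: ⟨G1, G_{>1}⟩ = rank(A), where G1 = U1ᵀU1 and G_{>1} = G⁺ ∘ ∘_{a=2}^N (UaᵀUa). In particular this constant is nonzero. -/

import Mathlib

open Matrix

/-- `P` is the Moore-Penrose pseudoinverse of `M`. -/
def IsMoorePenrose {n m : ℕ} (M : Matrix (Fin n) (Fin m) ℝ) (P : Matrix (Fin m) (Fin n) ℝ) : Prop :=
  M * P * M = M ∧ P * M * P = P ∧ (M * P)ᵀ = M * P ∧ (P * M)ᵀ = P * M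

/-- Khatri-Rao product of matrices `U j : I j × R`, with rows indexed by tuples. -/
def krp {N R : ℕ} {I : Fin N → ℕ} (U : ∀ j, Matrix (Fin (I j)) (Fin R) ℝ) :
    Matrix (∀ j, Fin (I j)) (Fin R) ℝ :=
  Matrix.of fun i r => ∏ j, U j (i j) r

lemma trace_mulVecLin_aux {n : ℕ} (E : Matrix (Fin n) (Fin n) ℝ) :
    LinearMap.trace ℝ _ E.mulVecLin = E.trace := by
  rw [LinearMap.trace_eq_matrix_trace ℝ (Pi.basisFun ℝ (Fin n))]
  congr 1
  ext i j
  simp [LinearMap.toMatrix_apply, Matrix.mulVec, dotProduct, Pi.single_apply]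

lemma trace_eq_rank_of_idem {n : ℕ} (E : Matrix (Fin n) (Fin n) ℝ) (h : E * E = E) :
    E.trace = (E.rank : ℝ) := by
  have hf : E.mulVecLin ∘ₗ E.mulVecLin = E.mulVecLin := by
    rw [← Matrix.mulVecLin_mul, h]
  have hproj : LinearMap.IsProj (LinearMap.range E.mulVecLin) E.mulVecLin := by
    constructor
    · intro x; exact LinearMap.mem_range_self _ x
    · rintro x ⟨y, rfl⟩
      exact congrFun (congrArg DFunLike.coe hf) y
  rw [Matrix.rank, ← trace_mulVecLin_aux E, hproj.trace]

lemma rank_ne_zero_of_ne_zero {m n : Type*} [Fintype m] [Fintype n] [DecidableEq n]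
    (A : Matrix m n ℝ) (h : A ≠ 0) : A.rank ≠ 0 := by
  intro h0
  apply h
  have hbot : LinearMap.range A.mulVecLin = ⊥ := Submodule.finrank_eq_zero.mp h0
  ext i j
  have hm : A.mulVecLin (Pi.single j 1) ∈ (⊥ : Submodule ℝ (m → ℝ)) := by
    rw [← hbot]; exact LinearMap.mem_range_self _ _
  rw [Submodule.mem_bot] at hm
  have := congrFun hm i
  simpa [Matrix.mulVecLin_apply, Matrix.mulVec_single] using this

/-- For a nonzero Khatri-Rao product `A = U1 ⊙ ... ⊙ UN`, the normalization constant of the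
first conditional draw equals the rank of `A`: `⟨G1, G_{>1}⟩ = rank A`, where
`G1 = U1ᵀU1` and `G_{>1} = G⁺ ∘ ∘_{a≥2} (UaᵀUa)`.  In particular it is nonzero. -/
theorem first_normalization_eq_rank {N R : ℕ} {I : Fin (N + 1) → ℕ}
    (U : ∀ j, Matrix (Fin (I j)) (Fin R) ℝ)
    (Gplus : Matrix (Fin R) (Fin R) ℝ)
    (hG : IsMoorePenrose ((krp U)ᵀ * krp U) Gplus)
    (hA : krp U ≠ 0)
    (Ggt : Matrix (Fin R) (Fin R) ℝ)
    (hGgt : Ggt = Matrix.of fun r c =>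
      Gplus r c * ∏ a ∈ Finset.univ.filter (fun a : Fin (N + 1) => a ≠ 0), ((U a)ᵀ * U a) r c) :
    (∑ r, ∑ c, ((U 0)ᵀ * U 0) r c * Ggt r c = ((krp U).rank : ℝ)) ∧
      (∑ r, ∑ c, ((U 0)ᵀ * U 0) r c * Ggt r c ≠ 0) := by
  set A := krp U with hAdef
  set G := Aᵀ * A with hGdef
  -- entrywise Hadamard factorization of G
  have hGprod : ∀ r c, G r c = ∏ j, ((U j)ᵀ * U j) r c := by
    intro r c
    simp only [hGdef, hAdef, Matrix.mul_apply, Matrix.transpose_apply, krp, Matrix.of_apply]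
    rw [Fintype.prod_sum (f := fun j x => U j x r * U j x c)]
    congr 1
    ext i
    rw [← Finset.prod_mul_distrib]
  -- rewrite the double sum
  have hfilter : (Finset.univ.filter (fun a : Fin (N + 1) => a ≠ 0)) = Finset.univ.erase 0 := by
    ext a; simp [Finset.mem_filter, Finset.mem_erase, and_comm]
  have hsum : ∑ r, ∑ c, ((U 0)ᵀ * U 0) r c * Ggt r c = (Gplus * G).trace := by
    rw [Matrix.trace]
    simp only [Matrix.diag, Matrix.mul_apply]
    congr 1; ext r
    congr 1; ext c
    have hsymm : G c r = G r c := by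
      have ht : Gᵀ = G := by
        rw [hGdef, Matrix.transpose_mul, Matrix.transpose_transpose]
      calc G c r = Gᵀ r c := rfl
        _ = G r c := by rw [ht]
    rw [hGgt, hfilter]
    simp only [Matrix.of_apply]
    rw [hsymm, hGprod r c,
      ← Finset.mul_prod_erase Finset.univ (fun j => ((U j)ᵀ * U j) r c) (Finset.mem_univ 0)]
    simp only [Matrix.mul_apply]
    ring
  obtain ⟨h1, h2, h3, h4⟩ := hG
  have hidem : (Gplus * G) * (Gplus * G) = Gplus * G := by
    calc (Gplus * G) * (Gplus * G) = Gplus * (G * Gplus * G) := by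
          simp only [Matrix.mul_assoc]
      _ = Gplus * G := by rw [h1]
  have hrank : (Gplus * G).rank = A.rank := by
    have hle1 : (Gplus * G).rank ≤ G.rank := Matrix.rank_mul_le_right Gplus G
    have hle2 : G.rank ≤ (Gplus * G).rank := by
      have : G = G * (Gplus * G) := by rw [← Matrix.mul_assoc, h1]
      calc G.rank = (G * (Gplus * G)).rank := by rw [← this]
        _ ≤ (Gplus * G).rank := Matrix.rank_mul_le_right _ _
    have : (Gplus * G).rank = G.rank := le_antisymm hle1 hle2
    rw [this, hGdef, Matrix.rank_transpose_mul_self]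
  have hmain : ∑ r, ∑ c, ((U 0)ᵀ * U 0) r c * Ggt r c = (A.rank : ℝ) := by
    rw [hsum, trace_eq_rank_of_idem _ hidem, hrank]
  refine ⟨hmain, ?_⟩
  rw [hmain]
  exact_mod_cast rank_ne_zero_of_ne_zero A hA
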